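/- Let P be a simple orthogonal polygon (as a compact region) and let t be a horizontal tooth edge of P on the lower boundary, i.e., t = [c,d] × {h} ⊆ ∂P with P locally above t and both endpoints of t convex vertices (so the vertical edges adjacent to t go upward and P ∩ (ℝ × {h'}) for h' slightly below h near t is empty, and points of P adjacent to t on the left and right of [c,d] at height h do not exist). Then any point g ∈ P that r-sees some point of t satisfies c ≤ g₁ ≤ d, where g₁ is the x-coordinate of g; i.e., g lies in the vertical strip [c,d] × ℝ. -/
import Mathlib


/-- The axis-aligned rectangle spanned by two points of the plane. -/
def spanRect (p q : ℝ × ℝ) : Set (ℝ × ℝ) :=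
  Set.Icc (min p.1 q.1) (max p.1 q.1) ×ˢ Set.Icc (min p.2 q.2) (max p.2 q.2)

/-- If `t = [c,d] × {h}` is a lower tooth edge of a compact region `P`
(`P` locally above `t`, no points of `P` at height `h` just left of `c` or just right
of `d`), then any point `g ∈ P` that r-sees some point of `t` lies in the vertical
strip `[c,d] × ℝ`. -/
theorem guard_seeing_tooth_lies_in_shadow_strip (P : Set (ℝ × ℝ)) (hP : IsCompact P)
    (c d h : ℝ) (hcd : c ≤ d)
    (ht : Set.Icc c d ×ˢ ({h} : Set ℝ) ⊆ P)
    (ε : ℝ) (hε : 0 < ε)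
    (hside : ∀ x ∈ Set.Ico (c - ε) c ∪ Set.Ioc d (d + ε), (x, h) ∉ P)
    (hbelow : ∀ x ∈ Set.Icc c d, ∀ y ∈ Set.Ico (h - ε) h, (x, y) ∉ P)
    (g : ℝ × ℝ) (hg : g ∈ P)
    (hsee : ∃ q ∈ Set.Icc c d ×ˢ ({h} : Set ℝ), spanRect g q ⊆ P) :
    c ≤ g.1 ∧ g.1 ≤ d := by
  obtain ⟨q, hq, hrect⟩ := hsee
  obtain ⟨hqx, hqy⟩ := hq
  simp only [Set.mem_singleton_iff] at hqy
  have hh : h ∈ Set.Icc (min g.2 q.2) (max g.2 q.2) := by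
    constructor
    · rw [hqy] at *; exact min_le_right _ _
    · rw [hqy] at *; exact le_max_right _ _
  constructor
  · by_contra hlt
    push_neg at hlt
    set x0 := max g.1 (c - ε/2) with hx0
    have h1 : x0 < c := max_lt hlt (by linarith)
    have hmem : (x0, h) ∈ spanRect g q := by
      refine ⟨⟨?_, ?_⟩, hh⟩
      · exact le_trans (min_le_left _ _) (le_max_left _ _)
      · exact le_trans (le_of_lt h1) (le_trans hqx.1 (le_max_right _ _))
    exact hside x0 (Or.inl ⟨le_trans (by linarith) (le_max_right _ _), h1⟩) (hrect hmem)
  · by_contra hlt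
    push_neg at hlt
    set x0 := min g.1 (d + ε/2) with hx0
    have h1 : d < x0 := lt_min hlt (by linarith)
    have hmem : (x0, h) ∈ spanRect g q := by
      refine ⟨⟨?_, ?_⟩, hh⟩
      · exact le_trans (min_le_right _ _) (le_trans hqx.2 h1.le)
      · exact le_trans (min_le_left _ _) (le_max_left _ _)
    exact hside x0 (Or.inr ⟨h1, min_le_of_right_le (by linarith)⟩) (hrect hmem)
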